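/- Let A = {−1,1} and let r > 3 be odd. Define δ = (r−3)/2 if r ≡ 1 (mod 4) and δ = (r−5)/2 if r ≡ 3 (mod 4). Then η_A(C_3^r) ≥ 2^{r−1} + binom(r−1, δ); equivalently, there exists a sequence over C_3^r of length 2^{r−1} + binom(r−1, δ) − 1 with no nonempty A-zero-sum subsequence of length at most 3. -/

import Mathlib

/-- A multiset `S` over an additive abelian group `G` has an `A`-zero-sum subsequence
of length `k`, for the weight set `A = {-1, 1}`: there is a sub-multiset of `S` of
cardinality `k` that splits as `t₁ + t₂` with `t₁.sum - t₂.sum = 0` (the elements of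
`t₁` receive the weight `+1` and those of `t₂` the weight `-1`). -/
def HasWZSS {G : Type*} [AddCommGroup G] (S : Multiset G) (k : ℕ) : Prop :=
  ∃ t₁ t₂ : Multiset G, t₁ + t₂ ≤ S ∧ Multiset.card (t₁ + t₂) = k ∧ t₁.sum = t₂.sum

/-- `sA G` is the smallest `ℓ` such that every sequence over `G` of length at least `ℓ`
has an `{-1,1}`-zero-sum subsequence of length `exp G`. -/
noncomputable def sA (G : Type*) [AddCommGroup G] : ℕ :=
  sInf {ℓ : ℕ | ∀ S : Multiset G, ℓ ≤ Multiset.card S →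
    HasWZSS S (AddMonoid.exponent G)}

/-- `etaA G` is the smallest `ℓ` such that every sequence over `G` of length at least `ℓ`
has a nonempty `{-1,1}`-zero-sum subsequence of length at most `exp G`. -/
noncomputable def etaA (G : Type*) [AddCommGroup G] : ℕ :=
  sInf {ℓ : ℕ | ∀ S : Multiset G, ℓ ≤ Multiset.card S →
    ∃ k, 1 ≤ k ∧ k ≤ AddMonoid.exponent G ∧ HasWZSS S k}

/-- `gA G` is the smallest `ℓ` such that every sequence over `G` of length at least `ℓ`
consisting of pairwise distinct elements has an `{-1,1}`-zero-sum subsequence of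
length `exp G`. -/
noncomputable def gA (G : Type*) [AddCommGroup G] : ℕ :=
  sInf {ℓ : ℕ | ∀ S : Multiset G, ℓ ≤ Multiset.card S → S.Nodup →
    HasWZSS S (AddMonoid.exponent G)}

namespace EtaAux

abbrev V5 := Fin 5 → ZMod 3

/-- the 20 representatives of a symmetric cap in `F_3^5` of size 40. -/
def E : List V5 :=
  [![0,0,1,0,1], ![0,0,1,2,0], ![0,0,1,2,1], ![0,1,0,2,1], ![0,1,2,0,2],
   ![1,0,1,0,1], ![1,0,2,0,0], ![1,0,2,0,1], ![1,0,2,1,0], ![1,0,2,1,2],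
   ![1,1,1,1,0], ![1,1,1,2,0], ![1,1,1,2,1], ![1,1,2,0,2], ![1,1,2,2,0],
   ![1,2,0,2,1], ![1,2,1,0,0], ![1,2,1,0,2], ![1,2,1,2,0], ![1,2,1,2,1]]

set_option maxHeartbeats 4000000 in
set_option maxRecDepth 100000 in
lemma hE0 : ∀ x ∈ E, ¬(x 0 = 0 ∧ x 1 = 0 ∧ x 2 = 0 ∧ x 3 = 0 ∧ x 4 = 0) := by decide

set_option maxHeartbeats 4000000 in
set_option maxRecDepth 100000 in
lemma hE1 : ∀ x ∈ E, ∀ y ∈ E,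
    ¬(x 0 + y 0 = 0 ∧ x 1 + y 1 = 0 ∧ x 2 + y 2 = 0 ∧ x 3 + y 3 = 0 ∧ x 4 + y 4 = 0) := by
  decide

set_option maxHeartbeats 8000000 in
set_option maxRecDepth 1000000 in
lemma hE2 : ∀ x ∈ E, ∀ y ∈ E, ∀ z ∈ E,
    (x 0 = y 0 ∧ x 1 = y 1 ∧ x 2 = y 2 ∧ x 3 = y 3 ∧ x 4 = y 4) ∨
    ¬(x 0 + y 0 = z 0 ∧ x 1 + y 1 = z 1 ∧ x 2 + y 2 = z 2 ∧ x 3 + y 3 = z 3 ∧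
      x 4 + y 4 = z 4) := by
  decide

set_option maxHeartbeats 8000000 in
set_option maxRecDepth 1000000 in
lemma hE3 : ∀ x ∈ E, ∀ y ∈ E, ∀ z ∈ E,
    (x 0 = y 0 ∧ x 1 = y 1 ∧ x 2 = y 2 ∧ x 3 = y 3 ∧ x 4 = y 4) ∨
    (x 0 = z 0 ∧ x 1 = z 1 ∧ x 2 = z 2 ∧ x 3 = z 3 ∧ x 4 = z 4) ∨
    (z 0 = y 0 ∧ z 1 = y 1 ∧ z 2 = y 2 ∧ z 3 = y 3 ∧ z 4 = y 4) ∨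
    ¬(x 0 + y 0 + z 0 = 0 ∧ x 1 + y 1 + z 1 = 0 ∧ x 2 + y 2 + z 2 = 0 ∧
      x 3 + y 3 + z 3 = 0 ∧ x 4 + y 4 + z 4 = 0) := by
  decide

set_option maxHeartbeats 1000000 in
set_option maxRecDepth 100000 in
lemma hEnodup : E.Nodup := by decide

lemma hElen : E.length = 20 := rfl

lemma ext5 {x y : V5} (h0 : x 0 = y 0) (h1 : x 1 = y 1) (h2 : x 2 = y 2)
    (h3 : x 3 = y 3) (h4 : x 4 = y 4) : x = y := by
  funext i; fin_cases i <;> assumption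

section Main

variable {r : ℕ}

/-- embedding: first 5 coordinates from `x`, remaining from a `±1`-pattern `f`. -/
def emb (r : ℕ) (x : V5) (f : Fin (r - 5) → Bool) : Fin r → ZMod 3 :=
  fun i => if h : (i : ℕ) < 5 then x ⟨i, h⟩
    else if f ⟨(i : ℕ) - 5, by omega⟩ then 1 else 2

/-- the construction: all vectors whose head is in `E` and tail entries in `{1,2}`. -/
def DD (r : ℕ) : Finset (Fin r → ZMod 3) :=
  (E.toFinset ×ˢ (Finset.univ : Finset (Fin (r - 5) → Bool))).image fun p => emb r p.1 p.2

def hd (hr5 : 5 ≤ r) (g : Fin r → ZMod 3) : V5 := fun i => g (Fin.castLE hr5 i)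

lemma hd_emb (hr5 : 5 ≤ r) (x : V5) (f : Fin (r - 5) → Bool) : hd hr5 (emb r x f) = x := by
  funext i
  have hi : ((Fin.castLE hr5 i : Fin r) : ℕ) < 5 := i.isLt
  simp only [hd, emb, dif_pos hi]
  exact congrArg x (Fin.ext rfl)

lemma hd_add (hr5 : 5 ≤ r) (a b : Fin r → ZMod 3) (i : Fin 5) :
    hd hr5 (a + b) i = hd hr5 a i + hd hr5 b i := rfl

lemma mem_DD (hr5 : 5 ≤ r) {g : Fin r → ZMod 3} (hg : g ∈ DD r) :
    hd hr5 g ∈ E ∧ ∀ i : Fin r, 5 ≤ (i : ℕ) → g i = 1 ∨ g i = 2 := by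
  obtain ⟨⟨x, f⟩, hmem, rfl⟩ := Finset.mem_image.mp hg
  obtain ⟨hx, -⟩ := Finset.mem_product.mp hmem
  constructor
  · rw [hd_emb hr5]; exact List.mem_toFinset.mp hx
  · intro i hi
    simp only [emb, dif_neg (by omega : ¬ (i : ℕ) < 5)]
    split <;> simp

lemma eq_of_hd_tail (hr5 : 5 ≤ r) {a b : Fin r → ZMod 3}
    (hh : hd hr5 a = hd hr5 b) (ht : ∀ i : Fin r, 5 ≤ (i : ℕ) → a i = b i) : a = b := by
  funext i
  by_cases h : (i : ℕ) < 5
  · have := congrFun hh ⟨i, h⟩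
    simpa only [hd, Fin.castLE_mk, Fin.eta] using this
  · exact ht i (by omega)

-- pointwise facts about {1,2} ⊆ ZMod 3
lemma pt3 : ∀ u v w : ZMod 3, (u = 1 ∨ u = 2) → (v = 1 ∨ v = 2) → (w = 1 ∨ w = 2) →
    u + v + w = 0 → u = v ∧ v = w := by decide

lemma pt2 : ∀ u v w : ZMod 3, (u = 1 ∨ u = 2) → (v = 1 ∨ v = 2) → (w = 1 ∨ w = 2) →
    u + v = w → u = v := by decide

lemma key0 (hr5 : 5 ≤ r) {a : Fin r → ZMod 3} (ha : a ∈ DD r) : a ≠ 0 := by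
  intro h
  refine hE0 _ (mem_DD hr5 ha).1 ?_
  refine ⟨?_, ?_, ?_, ?_, ?_⟩ <;> exact congrFun h _

lemma key2 (hr5 : 5 ≤ r) {a b : Fin r → ZMod 3} (ha : a ∈ DD r) (hb : b ∈ DD r) :
    a + b ≠ 0 := by
  intro h
  refine hE1 _ (mem_DD hr5 ha).1 _ (mem_DD hr5 hb).1 ?_
  refine ⟨?_, ?_, ?_, ?_, ?_⟩ <;> exact congrFun h _

lemma key21 (hr5 : 5 ≤ r) {a b c : Fin r → ZMod 3} (ha : a ∈ DD r) (hb : b ∈ DD r)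
    (hc : c ∈ DD r) (hab : a ≠ b) : a + b ≠ c := by
  intro h
  obtain ⟨haE, haT⟩ := mem_DD hr5 ha
  obtain ⟨hbE, hbT⟩ := mem_DD hr5 hb
  obtain ⟨hcE, hcT⟩ := mem_DD hr5 hc
  have htail : ∀ i : Fin r, 5 ≤ (i : ℕ) → a i = b i := fun i hi =>
    pt2 (a i) (b i) (c i) (haT i hi) (hbT i hi) (hcT i hi) (congrFun h i)
  rcases hE2 _ haE _ hbE _ hcE with heq | hneq
  · exact hab (eq_of_hd_tail hr5 (ext5 heq.1 heq.2.1 heq.2.2.1 heq.2.2.2.1 heq.2.2.2.2) htail)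
  · exact hneq ⟨congrFun h _, congrFun h _, congrFun h _, congrFun h _, congrFun h _⟩

lemma key3 (hr5 : 5 ≤ r) {a b c : Fin r → ZMod 3} (ha : a ∈ DD r) (hb : b ∈ DD r)
    (hc : c ∈ DD r) (hab : a ≠ b) (hac : a ≠ c) (hbc : b ≠ c) : a + b + c ≠ 0 := by
  intro h
  obtain ⟨haE, haT⟩ := mem_DD hr5 ha
  obtain ⟨hbE, hbT⟩ := mem_DD hr5 hb
  obtain ⟨hcE, hcT⟩ := mem_DD hr5 hc
  have htail : ∀ i : Fin r, 5 ≤ (i : ℕ) → a i = b i ∧ b i = c i := fun i hi =>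
    pt3 (a i) (b i) (c i) (haT i hi) (hbT i hi) (hcT i hi) (congrFun h i)
  rcases hE3 _ haE _ hbE _ hcE with heq | heq | heq | hneq
  · exact hab (eq_of_hd_tail hr5 (ext5 heq.1 heq.2.1 heq.2.2.1 heq.2.2.2.1 heq.2.2.2.2)
      (fun i hi => (htail i hi).1))
  · exact hac (eq_of_hd_tail hr5 (ext5 heq.1 heq.2.1 heq.2.2.1 heq.2.2.2.1 heq.2.2.2.2)
      (fun i hi => ((htail i hi).1).trans (htail i hi).2))
  · exact hbc ((eq_of_hd_tail hr5 (ext5 heq.1 heq.2.1 heq.2.2.1 heq.2.2.2.1 heq.2.2.2.2)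
      (fun i hi => ((htail i hi).2).symm)).symm)
  · exact hneq ⟨congrFun h _, congrFun h _, congrFun h _, congrFun h _, congrFun h _⟩

lemma noWZSS (hr5 : 5 ≤ r) (S : Multiset (Fin r → ZMod 3)) (hS : S ≤ (DD r).val) :
    ¬ ∃ k, 1 ≤ k ∧ k ≤ 3 ∧ HasWZSS S k := by
  rintro ⟨k, hk1, hk3, t₁, t₂, hle, hcard, hsum⟩
  have hleD : t₁ + t₂ ≤ (DD r).val := le_trans hle hS
  have hnd : (t₁ + t₂).Nodup := Multiset.nodup_of_le hleD (DD r).nodup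
  have hmem : ∀ a ∈ t₁ + t₂, a ∈ DD r := fun a ha => Multiset.mem_of_le hleD ha
  rw [Multiset.card_add] at hcard
  interval_cases k
  · -- k = 1
    obtain ⟨h1, h2⟩ | ⟨h1, h2⟩ :
        (Multiset.card t₁ = 1 ∧ Multiset.card t₂ = 0) ∨
        (Multiset.card t₁ = 0 ∧ Multiset.card t₂ = 1) := by omega
    · obtain ⟨a, rfl⟩ := Multiset.card_eq_one.mp h1
      rw [Multiset.card_eq_zero.mp h2] at hsum hmem
      simp only [Multiset.sum_singleton, Multiset.sum_zero] at hsum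
      exact key0 hr5 (hmem a (by simp)) hsum
    · obtain ⟨a, rfl⟩ := Multiset.card_eq_one.mp h2
      rw [Multiset.card_eq_zero.mp h1] at hsum hmem
      simp only [Multiset.sum_singleton, Multiset.sum_zero] at hsum
      exact key0 hr5 (hmem a (by simp)) hsum.symm
  · -- k = 2
    obtain ⟨h1, h2⟩ | ⟨h1, h2⟩ | ⟨h1, h2⟩ :
        (Multiset.card t₁ = 2 ∧ Multiset.card t₂ = 0) ∨
        (Multiset.card t₁ = 1 ∧ Multiset.card t₂ = 1) ∨
        (Multiset.card t₁ = 0 ∧ Multiset.card t₂ = 2) := by omega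
    · obtain ⟨a, b, rfl⟩ := Multiset.card_eq_two.mp h1
      rw [Multiset.card_eq_zero.mp h2] at hsum hmem
      simp only [Multiset.insert_eq_cons, Multiset.sum_cons, Multiset.sum_singleton,
        Multiset.sum_zero] at hsum
      exact key2 hr5 (hmem a (by simp)) (hmem b (by simp)) hsum
    · obtain ⟨a, rfl⟩ := Multiset.card_eq_one.mp h1
      obtain ⟨b, rfl⟩ := Multiset.card_eq_one.mp h2
      simp only [Multiset.sum_singleton] at hsum
      subst hsum
      simp [Multiset.singleton_add] at hnd
    · obtain ⟨a, b, rfl⟩ := Multiset.card_eq_two.mp h2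
      rw [Multiset.card_eq_zero.mp h1] at hsum hmem
      simp only [Multiset.insert_eq_cons, Multiset.sum_cons, Multiset.sum_singleton,
        Multiset.sum_zero] at hsum
      exact key2 hr5 (hmem a (by simp)) (hmem b (by simp)) hsum.symm
  · -- k = 3
    obtain ⟨h1, h2⟩ | ⟨h1, h2⟩ | ⟨h1, h2⟩ | ⟨h1, h2⟩ :
        (Multiset.card t₁ = 3 ∧ Multiset.card t₂ = 0) ∨
        (Multiset.card t₁ = 2 ∧ Multiset.card t₂ = 1) ∨
        (Multiset.card t₁ = 1 ∧ Multiset.card t₂ = 2) ∨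
        (Multiset.card t₁ = 0 ∧ Multiset.card t₂ = 3) := by omega
    · obtain ⟨a, b, c, rfl⟩ := Multiset.card_eq_three.mp h1
      rw [Multiset.card_eq_zero.mp h2] at hsum hmem hnd
      simp only [Multiset.insert_eq_cons, Multiset.sum_cons, Multiset.sum_singleton,
        Multiset.sum_zero] at hsum
      simp only [add_zero, Multiset.insert_eq_cons, Multiset.nodup_cons, Multiset.mem_cons,
        Multiset.mem_singleton, Multiset.nodup_singleton] at hnd
      push_neg at hnd
      refine key3 hr5 (hmem a (by simp)) (hmem b (by simp)) (hmem c (by simp))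
        hnd.1.1 hnd.1.2 hnd.2.1 ?_
      rw [add_assoc]; exact hsum
    · obtain ⟨a, b, rfl⟩ := Multiset.card_eq_two.mp h1
      obtain ⟨c, rfl⟩ := Multiset.card_eq_one.mp h2
      simp only [Multiset.insert_eq_cons, Multiset.sum_cons, Multiset.sum_singleton] at hsum
      simp only [Multiset.insert_eq_cons, Multiset.cons_add, Multiset.singleton_add,
        Multiset.nodup_cons, Multiset.mem_cons, Multiset.mem_singleton] at hnd
      push_neg at hnd
      exact key21 hr5 (hmem a (by simp)) (hmem b (by simp)) (hmem c (by simp))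
        hnd.1.1 hsum
    · obtain ⟨a, rfl⟩ := Multiset.card_eq_one.mp h1
      obtain ⟨b, c, rfl⟩ := Multiset.card_eq_two.mp h2
      simp only [Multiset.insert_eq_cons, Multiset.sum_cons, Multiset.sum_singleton] at hsum
      simp only [Multiset.insert_eq_cons, Multiset.singleton_add, Multiset.nodup_cons,
        Multiset.mem_cons, Multiset.mem_singleton] at hnd
      push_neg at hnd
      refine key21 hr5 (hmem b (by simp)) (hmem c (by simp)) (hmem a (by simp))
        hnd.2.1 hsum.symm
    · obtain ⟨a, b, c, rfl⟩ := Multiset.card_eq_three.mp h2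
      rw [Multiset.card_eq_zero.mp h1] at hsum hmem hnd
      simp only [Multiset.insert_eq_cons, Multiset.sum_cons, Multiset.sum_singleton,
        Multiset.sum_zero] at hsum
      simp only [zero_add, Multiset.insert_eq_cons, Multiset.nodup_cons, Multiset.mem_cons,
        Multiset.mem_singleton, Multiset.nodup_singleton] at hnd
      push_neg at hnd
      refine key3 hr5 (hmem a (by simp)) (hmem b (by simp)) (hmem c (by simp))
        hnd.1.1 hnd.1.2 hnd.2.1 ?_
      rw [add_assoc]; exact hsum.symm

lemma emb_injective (hr5 : 5 ≤ r) :
    Function.Injective (fun p : V5 × (Fin (r - 5) → Bool) => emb r p.1 p.2) := by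
  rintro ⟨x, f⟩ ⟨y, g⟩ h
  simp only [Prod.mk.injEq]
  constructor
  · funext i
    have := congrFun h (Fin.castLE hr5 i)
    have hi : ((Fin.castLE hr5 i : Fin r) : ℕ) < 5 := i.isLt
    simpa only [emb, Fin.val_castLE, i.isLt, dif_pos, Fin.eta] using this
  · funext j
    have hj : 5 + (j : ℕ) < r := by omega
    have := congrFun h ⟨5 + (j : ℕ), hj⟩
    simp only [emb, dif_neg (by omega : ¬ (5 + (j : ℕ)) < 5)] at this
    have hf' : f ⟨5 + (j : ℕ) - 5, by omega⟩ = f j := congrArg f (Fin.ext (by simp))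
    have hg' : g ⟨5 + (j : ℕ) - 5, by omega⟩ = g j := congrArg g (Fin.ext (by simp))
    simp only [hf', hg'] at this
    cases hfj : f j <;> cases hgj : g j <;> rw [hfj, hgj] at this <;>
      first
        | rfl
        | (exact absurd this (by decide))

lemma card_DD (hr5 : 5 ≤ r) : (DD r).card = 20 * 2 ^ (r - 5) := by
  rw [DD, Finset.card_image_of_injective _ (emb_injective hr5), Finset.card_product,
    Finset.card_univ, Fintype.card_fun, Fintype.card_bool, Fintype.card_fin,
    List.toFinset_card_of_nodup hEnodup, hElen]

end Main

/-- `C(2(n+1), n) ≤ 4^n`. -/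
lemma choose_le_pow4 : ∀ n : ℕ, Nat.choose (2 * n + 2) n ≤ 4 ^ n := by
  intro n
  induction n with
  | zero => simp
  | succ n ih =>
    have hident : (n + 1) * (n + 3) * Nat.choose (2 * n + 4) (n + 1) =
        (2 * n + 3) * (2 * n + 4) * Nat.choose (2 * n + 2) n := by
      have hA := Nat.choose_mul_factorial_mul_factorial (show n + 1 ≤ 2 * n + 4 by omega)
      have hB := Nat.choose_mul_factorial_mul_factorial (show n ≤ 2 * n + 2 by omega)
      rw [show 2 * n + 4 - (n + 1) = n + 3 by omega] at hA
      rw [show 2 * n + 2 - n = n + 2 by omega] at hB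
      apply Nat.eq_of_mul_eq_mul_right
        (show 0 < Nat.factorial n * Nat.factorial (n + 2) from
          Nat.mul_pos (Nat.factorial_pos _) (Nat.factorial_pos _))
      rw [show (2 : ℕ) * n + 4 = (2 * n + 3) + 1 by omega] at hA
      rw [Nat.factorial_succ (2 * n + 3)] at hA
      rw [show (2 : ℕ) * n + 3 = (2 * n + 2) + 1 by omega] at hA
      rw [Nat.factorial_succ (2 * n + 2), ← hB] at hA
      rw [Nat.factorial_succ n, show (n : ℕ) + 3 = (n + 2) + 1 by omega,
        Nat.factorial_succ (n + 2)] at hA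
      calc (n + 1) * (n + 3) * Nat.choose (2 * n + 4) (n + 1) *
            (Nat.factorial n * Nat.factorial (n + 2))
          = Nat.choose (2 * n + 4) (n + 1) * ((n + 1) * Nat.factorial n) *
            ((n + 2 + 1) * Nat.factorial (n + 2)) := by ring
        _ = (2 * n + 2 + 1 + 1) * ((2 * n + 2 + 1) *
            (Nat.choose (2 * n + 2) n * Nat.factorial n * Nat.factorial (n + 2))) := hA
        _ = (2 * n + 3) * (2 * n + 4) * Nat.choose (2 * n + 2) n *
            (Nat.factorial n * Nat.factorial (n + 2)) := by ring
    have hineq : (n + 1) * (n + 3) * Nat.choose (2 * n + 4) (n + 1) ≤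
        (n + 1) * (n + 3) * (4 * Nat.choose (2 * n + 2) n) := by
      rw [hident]
      have h1 : (2 * n + 3) * (2 * n + 4) ≤ 4 * ((n + 1) * (n + 3)) := by nlinarith
      calc (2 * n + 3) * (2 * n + 4) * Nat.choose (2 * n + 2) n
          ≤ 4 * ((n + 1) * (n + 3)) * Nat.choose (2 * n + 2) n :=
            Nat.mul_le_mul_right _ h1
        _ = (n + 1) * (n + 3) * (4 * Nat.choose (2 * n + 2) n) := by ring
    have h2 : Nat.choose (2 * n + 4) (n + 1) ≤ 4 * Nat.choose (2 * n + 2) n :=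
      Nat.le_of_mul_le_mul_left hineq (by positivity)
    calc Nat.choose (2 * (n + 1) + 2) (n + 1) = Nat.choose (2 * n + 4) (n + 1) := by
          ring_nf
      _ ≤ 4 * Nat.choose (2 * n + 2) n := h2
      _ ≤ 4 * 4 ^ n := Nat.mul_le_mul_left _ ih
      _ = 4 ^ (n + 1) := by ring

lemma choose_mono_right {n a b : ℕ} (hab : a ≤ b) (hb : b ≤ n / 2) :
    Nat.choose n a ≤ Nat.choose n b := by
  obtain ⟨t, rfl⟩ := Nat.exists_eq_add_of_le hab
  clear hab
  induction t with
  | zero => simp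
  | succ t ih =>
    calc Nat.choose n a ≤ Nat.choose n (a + t) := ih (by omega)
      _ ≤ Nat.choose n (a + t + 1) :=
        Nat.choose_le_succ_of_lt_half_left (by omega)

lemma num_le {r : ℕ} (hr : 3 < r) (hodd : Odd r) :
    2 ^ (r - 1) + Nat.choose (r - 1) (if r % 4 = 1 then (r - 3) / 2 else (r - 5) / 2) - 1
      ≤ 20 * 2 ^ (r - 5) := by
  obtain ⟨m, hm⟩ := hodd
  have hm2 : 2 ≤ m := by omega
  have hδ : (if r % 4 = 1 then (r - 3) / 2 else (r - 5) / 2) ≤ m - 1 := by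
    split <;> omega
  have hmono : Nat.choose (r - 1) (if r % 4 = 1 then (r - 3) / 2 else (r - 5) / 2) ≤
      Nat.choose (2 * m) (m - 1) := by
    rw [show r - 1 = 2 * m by omega]
    exact choose_mono_right hδ (by omega)
  have hle4 : Nat.choose (2 * m) (m - 1) ≤ 4 ^ (m - 1) := by
    have := choose_le_pow4 (m - 1)
    rwa [show 2 * (m - 1) + 2 = 2 * m by omega] at this
  have h4 : (4 : ℕ) ^ (m - 1) = 2 ^ (r - 3) := by
    rw [show (4 : ℕ) = 2 ^ 2 from rfl, ← pow_mul]
    congr 1; omega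
  have hch : Nat.choose (r - 1) (if r % 4 = 1 then (r - 3) / 2 else (r - 5) / 2) ≤
      2 ^ (r - 3) := by
    calc _ ≤ Nat.choose (2 * m) (m - 1) := hmono
      _ ≤ 4 ^ (m - 1) := hle4
      _ = 2 ^ (r - 3) := h4
  have e1 : 2 ^ (r - 1) = 2 ^ (r - 5) * 16 := by
    rw [show r - 1 = (r - 5) + 4 by omega, pow_add]; norm_num
  have e3 : 2 ^ (r - 3) = 2 ^ (r - 5) * 4 := by
    rw [show r - 3 = (r - 5) + 2 by omega, pow_add]; norm_num
  rw [e1]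
  rw [e3] at hch
  omega

lemma exp3 {r : ℕ} (hr : 0 < r) : AddMonoid.exponent (Fin r → ZMod 3) = 3 := by
  have hz : ∀ x : ZMod 3, (3 : ℕ) • x = 0 := by decide
  apply Nat.dvd_antisymm
  · exact AddMonoid.exponent_dvd_of_forall_nsmul_eq_zero
      (fun g => funext fun i => by simpa using hz (g i))
  · have h1 : addOrderOf (fun _ => (1 : ZMod 3) : Fin r → ZMod 3) = 3 := by
      have : Fact (Nat.Prime 3) := ⟨Nat.prime_three⟩
      apply addOrderOf_eq_prime
      · exact funext fun i => by simpa using hz 1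
      · intro h
        have := congrFun h ⟨0, hr⟩
        simp at this
    have h2 := AddMonoid.addOrder_dvd_exponent (fun _ => (1 : ZMod 3) : Fin r → ZMod 3)
    rwa [h1] at h2

lemma pigeon {r : ℕ} (hr : 0 < r) (S : Multiset (Fin r → ZMod 3))
    (hS : 3 ^ r + 1 ≤ Multiset.card S) :
    ∃ k, 1 ≤ k ∧ k ≤ AddMonoid.exponent (Fin r → ZMod 3) ∧ HasWZSS S k := by
  refine ⟨2, by omega, by rw [exp3 hr]; omega, ?_⟩
  have hnd : ¬ S.Nodup := by
    intro h
    have h1 : S.toFinset.card = Multiset.card S :=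
      Multiset.toFinset_card_eq_card_iff_nodup.mpr h
    have h2 : S.toFinset.card ≤ Fintype.card (Fin r → ZMod 3) := Finset.card_le_univ _
    rw [Fintype.card_fun, ZMod.card, Fintype.card_fin] at h2
    omega
  rw [Multiset.nodup_iff_count_le_one] at hnd
  push_neg at hnd
  obtain ⟨a, ha⟩ := hnd
  refine ⟨{a}, {a}, ?_, by simp, rfl⟩
  rw [Multiset.le_iff_count]
  intro b
  rw [Multiset.count_add, Multiset.count_singleton]
  rcases eq_or_ne b a with rfl | hba
  · norm_num
    omega
  · simp [hba]

end EtaAux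

open EtaAux in
/-- Proposition 4: for odd `r > 3`, with `δ = (r-3)/2` if
`r ≡ 1 (mod 4)` and `δ = (r-5)/2` if `r ≡ 3 (mod 4)`,
`η_A(C_3^r) ≥ 2^(r-1) + C(r-1, δ)`; equivalently, there is a sequence over `C_3^r`
of length `2^(r-1) + C(r-1, δ) - 1` with no nonempty `{-1,1}`-zero-sum subsequence
of length at most `3`. -/
theorem etaA_lower_odd (r : ℕ) (hr : 3 < r) (hodd : Odd r) :
    2 ^ (r - 1) + Nat.choose (r - 1) (if r % 4 = 1 then (r - 3) / 2 else (r - 5) / 2)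
        ≤ etaA (Fin r → ZMod 3) ∧
    ∃ S : Multiset (Fin r → ZMod 3),
      Multiset.card S =
        2 ^ (r - 1) + Nat.choose (r - 1) (if r % 4 = 1 then (r - 3) / 2 else (r - 5) / 2) - 1 ∧
      ¬ ∃ k, 1 ≤ k ∧ k ≤ 3 ∧ HasWZSS S k := by
  have hr2 : r % 2 = 1 := Nat.odd_iff.mp hodd
  have hr5 : 5 ≤ r := by omega
  set NN := 2 ^ (r - 1) +
    Nat.choose (r - 1) (if r % 4 = 1 then (r - 3) / 2 else (r - 5) / 2) with hNN
  have hcard : NN - 1 ≤ (DD r).card := by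
    rw [card_DD hr5]; exact num_le hr hodd
  obtain ⟨S', hsub, hScard⟩ := Finset.exists_subset_card_eq hcard
  have hval : S'.val ≤ (DD r).val := Finset.val_le_iff.mpr hsub
  have hno : ¬ ∃ k, 1 ≤ k ∧ k ≤ 3 ∧ HasWZSS S'.val k := noWZSS hr5 _ hval
  have hSc : Multiset.card S'.val = NN - 1 := hScard
  refine ⟨?_, S'.val, hSc, hno⟩
  apply le_csInf
  · exact ⟨3 ^ r + 1, fun S hS => pigeon (by omega) S hS⟩
  · intro ℓ hℓ
    by_contra hlt
    push_neg at hlt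
    obtain ⟨k, hk1, hk2, hw⟩ := hℓ S'.val (by rw [hSc]; omega)
    rw [exp3 (by omega : 0 < r)] at hk2
    exact hno ⟨k, hk1, hk2, hw⟩
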